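/- arXiv:1102.3082 — 3 statements merged into one kernel-verified Lean document; each statement's English description precedes it below -/
import Mathlib

section
/- Medium-relay case: let 0 ≤ ε_2 ≤ ε_R ≤ ε_1 ≤ 1/2 with h(ε_R) < log 2, where h is the binary entropy function, and set α = (log 2 − h(ε_1)) / (log 2 − h(ε_R)). Then 0 ≤ α ≤ 1, and the rates R12 = log 2 − h(ε_R), R21 = log 2 − h(ε_1) satisfy all four achievability constraints: R12 − R21 ≤ (1 − α)·(log 2 − h(ε_R)), R21 ≤ α·(log 2 − h(ε_R)), R21 ≤ log 2 − h(ε_1), and R12 ≤ log 2 − h(ε_2). -/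
/-- Medium-relay case of the binary adder two-way relay channel. -/
theorem binary_adder_medium_relay
    (εR ε1 ε2 : ℝ) (h0 : 0 ≤ ε2) (h2R : ε2 ≤ εR) (hR1 : εR ≤ ε1) (h1 : ε1 ≤ 1 / 2)
    (hR : Real.binEntropy εR < Real.log 2)
    (α R12 R21 : ℝ)
    (hα : α = (Real.log 2 - Real.binEntropy ε1) / (Real.log 2 - Real.binEntropy εR))
    (hR12 : R12 = Real.log 2 - Real.binEntropy εR)
    (hR21 : R21 = Real.log 2 - Real.binEntropy ε1) :
    0 ≤ α ∧ α ≤ 1 ∧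
      R12 - R21 ≤ (1 - α) * (Real.log 2 - Real.binEntropy εR) ∧
      R21 ≤ α * (Real.log 2 - Real.binEntropy εR) ∧
      R21 ≤ Real.log 2 - Real.binEntropy ε1 ∧
      R12 ≤ Real.log 2 - Real.binEntropy ε2 := by
  have hmono := Real.binEntropy_strictMonoOn.monotoneOn
  have hR1' : Real.binEntropy εR ≤ Real.binEntropy ε1 := by
    apply hmono ⟨by linarith, by norm_num; linarith⟩ ⟨by linarith, by norm_num; linarith⟩ hR1
  have h2R' : Real.binEntropy ε2 ≤ Real.binEntropy εR := by
    apply hmono ⟨h0, by norm_num; linarith⟩ ⟨by linarith, by norm_num; linarith⟩ h2R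
  have h1log : Real.binEntropy ε1 ≤ Real.log 2 := Real.binEntropy_le_log_two
  have hden : 0 < Real.log 2 - Real.binEntropy εR := by linarith
  have hα0 : 0 ≤ α := by
    rw [hα]; exact div_nonneg (by linarith) hden.le
  have hα1 : α ≤ 1 := by
    rw [hα, div_le_one hden]; linarith
  have hmul : α * (Real.log 2 - Real.binEntropy εR) = Real.log 2 - Real.binEntropy ε1 := by
    rw [hα, div_mul_cancel₀ _ hden.ne']
  refine ⟨hα0, hα1, ?_, ?_, ?_, ?_⟩
  · rw [hR12, hR21]; nlinarith [hmul]
  · rw [hR21, hmul]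
  · rw [hR21]
  · rw [hR12]; linarith
end

section
/- Weak-relay case: let 0 ≤ ε_R ≤ ε_2 ≤ ε_1 ≤ 1/2 with h(ε_2) < log 2, where h is the binary entropy function, and set α = (log 2 − h(ε_1)) / (log 2 − h(ε_2)). Then 0 ≤ α ≤ 1, and the rates R12 = log 2 − h(ε_2), R21 = log 2 − h(ε_1) satisfy all four achievability constraints: R12 − R21 ≤ (1 − α)·(log 2 − h(ε_R)), R21 ≤ α·(log 2 − h(ε_R)), R21 ≤ log 2 − h(ε_1), and R12 ≤ log 2 − h(ε_2). -/
/-- Weak-relay case of the binary adder two-way relay channel. -/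
theorem binary_adder_weak_relay
    (εR ε1 ε2 : ℝ) (h0 : 0 ≤ εR) (hR2 : εR ≤ ε2) (h21 : ε2 ≤ ε1) (h1 : ε1 ≤ 1 / 2)
    (h2 : Real.binEntropy ε2 < Real.log 2)
    (α R12 R21 : ℝ)
    (hα : α = (Real.log 2 - Real.binEntropy ε1) / (Real.log 2 - Real.binEntropy ε2))
    (hR12 : R12 = Real.log 2 - Real.binEntropy ε2)
    (hR21 : R21 = Real.log 2 - Real.binEntropy ε1) :
    0 ≤ α ∧ α ≤ 1 ∧
      R12 - R21 ≤ (1 - α) * (Real.log 2 - Real.binEntropy εR) ∧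
      R21 ≤ α * (Real.log 2 - Real.binEntropy εR) ∧
      R21 ≤ Real.log 2 - Real.binEntropy ε1 ∧
      R12 ≤ Real.log 2 - Real.binEntropy ε2 := by
  have hmono := Real.binEntropy_strictMonoOn.monotoneOn
  have hmR : εR ∈ Set.Icc (0:ℝ) 2⁻¹ := ⟨h0, by linarith [hR2, h21, h1]⟩
  have hm2 : ε2 ∈ Set.Icc (0:ℝ) 2⁻¹ := ⟨by linarith, by linarith⟩
  have hm1 : ε1 ∈ Set.Icc (0:ℝ) 2⁻¹ := ⟨by linarith, by linarith⟩
  have hE12 : Real.binEntropy ε2 ≤ Real.binEntropy ε1 := hmono hm2 hm1 h21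
  have hER2 : Real.binEntropy εR ≤ Real.binEntropy ε2 := hmono hmR hm2 hR2
  have hE1 : Real.binEntropy ε1 ≤ Real.log 2 := Real.binEntropy_le_log_two
  have hd : 0 < Real.log 2 - Real.binEntropy ε2 := by linarith
  have hα0 : 0 ≤ α := by
    rw [hα]; exact div_nonneg (by linarith) hd.le
  have hα1 : α ≤ 1 := by
    rw [hα]; exact div_le_one_of_le₀ (by linarith) hd.le
  refine ⟨hα0, hα1, ?_, ?_, by rw [hR21], by rw [hR12]⟩
  · have h1α : 1 - α = (Real.binEntropy ε1 - Real.binEntropy ε2) /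
        (Real.log 2 - Real.binEntropy ε2) := by
      rw [hα]; field_simp; ring
    rw [hR12, hR21, h1α, div_mul_eq_mul_div, le_div_iff₀ hd]
    nlinarith
  · rw [hR21, hα, div_mul_eq_mul_div, le_div_iff₀ hd]
    nlinarith
end

section
/- Cut-set outer bound for the binary adder two-way relay channel: let X12, X21, Z_R, X_R, Z_2 be Bool-valued random variables on a probability space (Ω, μ) such that Z_R is independent of the pair (X12, X21) and Z_2 is independent of X_R, and set Y_R := X12 ⊕ X21 ⊕ Z_R and Y_2 := X_R ⊕ Z_2 (XOR). Then min( I[X12 : Y_R | X21], I[X_R : Y_2] ) ≤ min( log 2 − H[Z_R], log 2 − H[Z_2] ). -/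
open MeasureTheory ProbabilityTheory Real
open scoped ENNReal

/-- Shannon entropy (natural log) of a finite-valued random variable. -/
noncomputable def entropy {Ω S : Type*} [MeasurableSpace Ω] [MeasurableSpace S] [Fintype S]
    (X : Ω → S) (μ : Measure Ω) : ℝ :=
  ∑ s, Real.negMulLog ((μ.map X) {s}).toReal

/-- Conditional entropy H[X|Y]. -/
noncomputable def condEntropy {Ω S T : Type*} [MeasurableSpace Ω] [MeasurableSpace S] [Fintype S]
    [MeasurableSpace T] [Fintype T] (X : Ω → S) (Y : Ω → T) (μ : Measure Ω) : ℝ :=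
  ∑ t, ((μ.map Y) {t}).toReal * entropy X (μ[|Y ⁻¹' {t}])

/-- Mutual information I[X:Y]. -/
noncomputable def mutualInfo {Ω S T : Type*} [MeasurableSpace Ω] [MeasurableSpace S] [Fintype S]
    [MeasurableSpace T] [Fintype T] (X : Ω → S) (Y : Ω → T) (μ : Measure Ω) : ℝ :=
  entropy X μ + entropy Y μ - entropy (fun ω => (X ω, Y ω)) μ

/-- Conditional mutual information I[X:Y|Z]. -/
noncomputable def condMutualInfo {Ω S T U : Type*} [MeasurableSpace Ω] [MeasurableSpace S]
    [Fintype S] [MeasurableSpace T] [Fintype T] [MeasurableSpace U] [Fintype U]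
    (X : Ω → S) (Y : Ω → T) (Z : Ω → U) (μ : Measure Ω) : ℝ :=
  ∑ z, ((μ.map Z) {z}).toReal * mutualInfo X Y (μ[|Z ⁻¹' {z}])

/-- The uniform probability measure on `Bool` (mass 1/2 on each element). -/
noncomputable def uniformBool : Measure Bool := (2 : ℝ≥0∞)⁻¹ • Measure.count


section aux
variable {Ω : Type*} [MeasurableSpace Ω]

lemma entropy_congr {S : Type*} [MeasurableSpace S] [Fintype S] {X Y : Ω → S}
    {ν : Measure Ω} (h : X =ᵐ[ν] Y) : entropy X ν = entropy Y ν := by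
  unfold entropy; rw [Measure.map_congr h]

lemma map_singleton' (ν : Measure Ω) {S : Type*} [MeasurableSpace S] [MeasurableSingletonClass S]
    {X : Ω → S} (hX : Measurable X) (s : S) : ν.map X {s} = ν (X ⁻¹' {s}) :=
  Measure.map_apply hX (measurableSet_singleton s)

lemma sum_bool_one (m : Measure Bool) [IsProbabilityMeasure m] :
    (m {false}).toReal + (m {true}).toReal = 1 := by
  have h : m {false} + m {true} = 1 := by
    rw [← measure_union (by simp) (measurableSet_singleton true)]
    have : ({false} ∪ {true} : Set Bool) = Set.univ := by ext b; cases b <;> simp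
    rw [this, measure_univ]
  have hf := measure_ne_top m {false}
  have ht := measure_ne_top m {true}
  rw [← ENNReal.toReal_add hf ht, h, ENNReal.toReal_one]

lemma negMulLog_pair_le {p q : ℝ} (hp : 0 ≤ p) (hq : 0 ≤ q) (hpq : p + q = 1) :
    negMulLog p + negMulLog q ≤ Real.log 2 := by
  have hlog2 : (0:ℝ) ≤ Real.log 2 := Real.log_nonneg (by norm_num)
  rcases eq_or_lt_of_le hp with h0 | hp'
  · have : q = 1 := by linarith
    simp [← h0, this, Real.negMulLog_zero, Real.negMulLog_one, hlog2]
  rcases eq_or_lt_of_le hq with h0 | hq'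
  · have : p = 1 := by linarith
    simp [← h0, this, Real.negMulLog_zero, Real.negMulLog_one, hlog2]
  have hmem : ∀ x : ℝ, 0 < x → x⁻¹ ∈ Set.Ioi (0:ℝ) := fun x hx => by
    simp [Set.mem_Ioi, hx]
  have := strictConcaveOn_log_Ioi.concaveOn.2 (hmem p hp') (hmem q hq') hp hq hpq
  have hsum : p • p⁻¹ + q • q⁻¹ = 2 := by
    simp only [smul_eq_mul]
    rw [mul_inv_cancel₀ (ne_of_gt hp'), mul_inv_cancel₀ (ne_of_gt hq')]
    norm_num
  rw [hsum] at this
  have h1 : negMulLog p = p • Real.log p⁻¹ := by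
    rw [Real.negMulLog, Real.log_inv, smul_eq_mul]; ring
  have h2 : negMulLog q = q • Real.log q⁻¹ := by
    rw [Real.negMulLog, Real.log_inv, smul_eq_mul]; ring
  rw [h1, h2]; exact this

lemma entropy_bool_le (ν : Measure Ω) [IsProbabilityMeasure ν] {X : Ω → Bool}
    (hX : Measurable X) : entropy X ν ≤ Real.log 2 := by
  have : IsProbabilityMeasure (ν.map X) := Measure.isProbabilityMeasure_map hX.aemeasurable
  have hsum := sum_bool_one (ν.map X)
  have := negMulLog_pair_le (p := (ν.map X {false}).toReal) (q := (ν.map X {true}).toReal)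
    ENNReal.toReal_nonneg ENNReal.toReal_nonneg hsum
  unfold entropy
  rw [Fintype.sum_bool]
  linarith

lemma entropy_comp_equiv {S T : Type*} [MeasurableSpace S] [Fintype S] [MeasurableSpace T]
    [Fintype T] [MeasurableSingletonClass S] [MeasurableSingletonClass T]
    (ν : Measure Ω) {X : Ω → S} (hX : Measurable X) (e : S ≃ T) :
    entropy (fun ω => e (X ω)) ν = entropy X ν := by
  unfold entropy
  have hmap : ν.map (fun ω => e (X ω)) = (ν.map X).map e :=
    (Measure.map_map (measurable_of_countable e) hX).symm
  rw [hmap, ← Equiv.sum_comp e (fun t => Real.negMulLog (((ν.map X).map e) {t}).toReal)]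
  refine Finset.sum_congr rfl (fun s _ => ?_)
  congr 2
  rw [Measure.map_apply (measurable_of_countable e) (measurableSet_singleton _)]
  congr 1
  ext x
  simp [e.injective.eq_iff]

lemma entropy_pair_indep (ν : Measure Ω) [IsProbabilityMeasure ν] {X Z : Ω → Bool}
    (hX : Measurable X) (hZ : Measurable Z)
    (hind : ∀ a b, ν (X ⁻¹' {a} ∩ Z ⁻¹' {b}) = ν (X ⁻¹' {a}) * ν (Z ⁻¹' {b})) :
    entropy (fun ω => (X ω, Z ω)) ν = entropy X ν + entropy Z ν := by
  have hXp : IsProbabilityMeasure (ν.map X) := Measure.isProbabilityMeasure_map hX.aemeasurable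
  have hZp : IsProbabilityMeasure (ν.map Z) := Measure.isProbabilityMeasure_map hZ.aemeasurable
  have key : ∀ a b : Bool, ((ν.map (fun ω => (X ω, Z ω))) {(a, b)}).toReal
      = ((ν.map X) {a}).toReal * ((ν.map Z) {b}).toReal := by
    intro a b
    rw [map_singleton' ν (hX.prodMk hZ), map_singleton' ν hX, map_singleton' ν hZ]
    have hpre : (fun ω => (X ω, Z ω)) ⁻¹' {(a, b)} = X ⁻¹' {a} ∩ Z ⁻¹' {b} := by
      ext ω; simp [Prod.ext_iff]
    rw [hpre, hind a b, ENNReal.toReal_mul]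
  unfold entropy
  rw [Fintype.sum_prod_type]
  have : ∀ a : Bool, ∑ b : Bool, Real.negMulLog ((ν.map (fun ω => (X ω, Z ω))) {(a, b)}).toReal
      = (∑ b : Bool, ((ν.map Z) {b}).toReal) * Real.negMulLog ((ν.map X) {a}).toReal
        + ((ν.map X) {a}).toReal * ∑ b : Bool, Real.negMulLog ((ν.map Z) {b}).toReal := by
    intro a
    rw [Finset.sum_mul, Finset.mul_sum, ← Finset.sum_add_distrib]
    refine Finset.sum_congr rfl (fun b _ => ?_)
    rw [key a b, Real.negMulLog_mul]
  simp_rw [this]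
  rw [Finset.sum_add_distrib]
  simp only [← Finset.sum_mul, ← Finset.mul_sum]
  have h1 : ∑ b : Bool, ((ν.map Z) {b}).toReal = 1 := by
    rw [Fintype.sum_bool]; rw [add_comm]; exact sum_bool_one _
  have h2 : ∑ a : Bool, ((ν.map X) {a}).toReal = 1 := by
    rw [Fintype.sum_bool]; rw [add_comm]; exact sum_bool_one _
  rw [h1, h2]; ring

def xorEquiv (f : Bool → Bool) : Bool × Bool ≃ Bool × Bool where
  toFun p := (p.1, Bool.xor (f p.1) p.2)
  invFun p := (p.1, Bool.xor (f p.1) p.2)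
  left_inv p := by cases p with | mk a b => simp [← Bool.xor_assoc]
  right_inv p := by cases p with | mk a b => simp [← Bool.xor_assoc]

lemma mutual_le (ν : Measure Ω) [IsProbabilityMeasure ν] {X Z Y : Ω → Bool}
    (hX : Measurable X) (hZ : Measurable Z)
    (hind : ∀ a b, ν (X ⁻¹' {a} ∩ Z ⁻¹' {b}) = ν (X ⁻¹' {a}) * ν (Z ⁻¹' {b}))
    (f : Bool → Bool) (hY : ∀ ω, Y ω = Bool.xor (f (X ω)) (Z ω)) :
    mutualInfo X Y ν ≤ Real.log 2 - entropy Z ν := by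
  have hYm : Measurable Y := by
    have : Y = fun ω => Bool.xor (f (X ω)) (Z ω) := funext hY
    rw [this]
    exact (measurable_of_countable (fun p : Bool × Bool => Bool.xor (f p.1) p.2)).comp
      (hX.prodMk hZ)
  have hpair : (fun ω => (X ω, Y ω)) = fun ω => (xorEquiv f) ((X ω, Z ω)) := by
    funext ω; simp [xorEquiv, hY ω]
  have h1 : entropy (fun ω => (X ω, Y ω)) ν = entropy (fun ω => (X ω, Z ω)) ν := by
    rw [hpair]; exact entropy_comp_equiv ν (hX.prodMk hZ) (xorEquiv f)
  have h2 := entropy_pair_indep ν hX hZ hind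
  have h3 := entropy_bool_le ν hYm
  unfold mutualInfo
  rw [h1, h2]
  linarith

end aux

/-- Cut-set outer bound for the binary adder two-way relay channel. -/
theorem binary_adder_cut_set_outer_bound
    {Ω : Type*} [MeasurableSpace Ω] (μ : Measure Ω) [IsProbabilityMeasure μ]
    (X12 X21 ZR XR Z2 YR Y2 : Ω → Bool)
    (hX12 : Measurable X12) (hX21 : Measurable X21) (hZR : Measurable ZR)
    (hXR : Measurable XR) (hZ2 : Measurable Z2)
    (hindepR : IndepFun (fun ω => (X12 ω, X21 ω)) ZR μ)
    (hindep2 : IndepFun XR Z2 μ)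
    (hYR : YR = fun ω => Bool.xor (Bool.xor (X12 ω) (X21 ω)) (ZR ω))
    (hY2 : Y2 = fun ω => Bool.xor (XR ω) (Z2 ω)) :
    min (condMutualInfo X12 YR X21 μ) (mutualInfo XR Y2 μ) ≤
      min (Real.log 2 - entropy ZR μ) (Real.log 2 - entropy Z2 μ) := by
  have hind2 : ∀ a b, μ (XR ⁻¹' {a} ∩ Z2 ⁻¹' {b}) = μ (XR ⁻¹' {a}) * μ (Z2 ⁻¹' {b}) :=
    fun a b => hindep2.measure_inter_preimage_eq_mul _ _ (measurableSet_singleton a)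
      (measurableSet_singleton b)
  have hB : mutualInfo XR Y2 μ ≤ Real.log 2 - entropy Z2 μ :=
    mutual_le μ hXR hZ2 hind2 id (fun ω => by rw [hY2]; rfl)
  have hA : condMutualInfo X12 YR X21 μ ≤ Real.log 2 - entropy ZR μ := by
    unfold condMutualInfo
    haveI : IsProbabilityMeasure (μ.map X21) := Measure.isProbabilityMeasure_map hX21.aemeasurable
    have hsum1 : ∑ t : Bool, ((μ.map X21) {t}).toReal = 1 := by
      rw [Fintype.sum_bool, add_comm]; exact sum_bool_one _
    calc ∑ t, ((μ.map X21) {t}).toReal * mutualInfo X12 YR (μ[|X21 ⁻¹' {t}])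
        ≤ ∑ t : Bool, ((μ.map X21) {t}).toReal * (Real.log 2 - entropy ZR μ) := by
          apply Finset.sum_le_sum
          intro t _
          by_cases h0 : μ (X21 ⁻¹' {t}) = 0
          · rw [map_singleton' μ hX21, h0]; simp
          · set s : Set Ω := X21 ⁻¹' {t} with hs_def
            have hs : MeasurableSet s := hX21 (measurableSet_singleton t)
            set ν : Measure Ω := μ[|s] with hν_def
            haveI : IsProbabilityMeasure ν := cond_isProbabilityMeasure h0
            have fact1 : ∀ b, μ (s ∩ ZR ⁻¹' {b}) = μ s * μ (ZR ⁻¹' {b}) := by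
              intro b
              have h := hindepR.measure_inter_preimage_eq_mul (Set.univ ×ˢ {t}) {b}
                (MeasurableSet.univ.prod (measurableSet_singleton t))
                (measurableSet_singleton b)
              have hpre : (fun ω => (X12 ω, X21 ω)) ⁻¹' (Set.univ ×ˢ {t}) = s := by
                ext ω; simp only [Set.mem_preimage, Set.mem_prod, Set.mem_univ, Set.mem_singleton_iff, true_and, hs_def]
              rwa [hpre] at h
            have fact2 : ∀ a b, μ ((X12 ⁻¹' {a} ∩ s) ∩ ZR ⁻¹' {b})
                = μ (X12 ⁻¹' {a} ∩ s) * μ (ZR ⁻¹' {b}) := by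
              intro a b
              have h := hindepR.measure_inter_preimage_eq_mul ({a} ×ˢ {t}) {b}
                ((measurableSet_singleton a).prod (measurableSet_singleton t))
                (measurableSet_singleton b)
              have hpre : (fun ω => (X12 ω, X21 ω)) ⁻¹' ({a} ×ˢ {t}) = X12 ⁻¹' {a} ∩ s := by
                ext ω; simp [hs_def, eq_comm, and_comm]
              rwa [hpre] at h
            have hνZ : ∀ b, ν (ZR ⁻¹' {b}) = μ (ZR ⁻¹' {b}) := by
              intro b
              rw [hν_def, cond_apply hs, fact1 b, ← mul_assoc,
                ENNReal.inv_mul_cancel h0 (measure_ne_top μ s), one_mul]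
            have hind' : ∀ a b, ν (X12 ⁻¹' {a} ∩ ZR ⁻¹' {b})
                = ν (X12 ⁻¹' {a}) * ν (ZR ⁻¹' {b}) := by
              intro a b
              rw [hνZ b, hν_def, cond_apply hs, cond_apply hs]
              have h1 : s ∩ (X12 ⁻¹' {a} ∩ ZR ⁻¹' {b}) = (X12 ⁻¹' {a} ∩ s) ∩ ZR ⁻¹' {b} := by
                ext ω; simp; tauto
              have h2 : s ∩ X12 ⁻¹' {a} = X12 ⁻¹' {a} ∩ s := Set.inter_comm _ _
              rw [h1, fact2 a b, h2, mul_assoc]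
            have hZeq : entropy ZR ν = entropy ZR μ := by
              unfold entropy
              refine Finset.sum_congr rfl (fun b _ => ?_)
              rw [map_singleton' ν hZR, map_singleton' μ hZR, hνZ b]
            set Y' : Ω → Bool := fun ω => Bool.xor (Bool.xor (X12 ω) t) (ZR ω) with hY'_def
            have hae : YR =ᵐ[ν] Y' := by
              have hns : ν sᶜ = 0 := by
                rw [hν_def, cond_apply hs, Set.inter_compl_self, measure_empty, mul_zero]
              have hmem : s ∈ MeasureTheory.ae ν := mem_ae_iff.mpr hns
              filter_upwards [hmem] with ω hω
              have ht : X21 ω = t := hω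
              rw [hYR]; simp only [hY'_def, ht]
            have hmut : mutualInfo X12 YR ν = mutualInfo X12 Y' ν := by
              unfold mutualInfo
              have hpae : (fun ω => (X12 ω, YR ω)) =ᵐ[ν] (fun ω => (X12 ω, Y' ω)) := by
                filter_upwards [hae] with ω h; rw [h]
              rw [entropy_congr hae, entropy_congr hpae]
            have hle : mutualInfo X12 Y' ν ≤ Real.log 2 - entropy ZR ν :=
              mutual_le ν hX12 hZR hind' (fun x => Bool.xor x t) (fun ω => rfl)
            have : mutualInfo X12 YR (μ[|X21 ⁻¹' {t}]) ≤ Real.log 2 - entropy ZR μ := by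
              calc mutualInfo X12 YR ν = mutualInfo X12 Y' ν := hmut
                _ ≤ Real.log 2 - entropy ZR ν := hle
                _ = Real.log 2 - entropy ZR μ := by rw [hZeq]
            exact mul_le_mul_of_nonneg_left this ENNReal.toReal_nonneg
      _ = Real.log 2 - entropy ZR μ := by rw [← Finset.sum_mul, hsum1, one_mul]
  exact le_min (le_trans (min_le_left _ _) hA) (le_trans (min_le_right _ _) hB)
end
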